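/- Let X be a compact convex subset of R^d with a norm ||.||, let g be continuously differentiable on a neighborhood of X, and let x* in X be a gamma-sharp local minimum of g. Then x* is locally variationally coherent: there exists an open neighborhood U of x* such that <grad g(x), x - x*> > 0 for all x in (U intersect X) with x != x* (and equal to 0 for x = x*). -/

import Mathlib

open scoped RealInnerProductSpace Topology

lemma aux_dir_deriv_sharp {d : ℕ}
    (X : Set (EuclideanSpace ℝ (Fin d))) (hXconvex : Convex ℝ X)
    (g : EuclideanSpace ℝ (Fin d) → ℝ)
    (xstar : EuclideanSpace ℝ (Fin d)) (hxstar : xstar ∈ X)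
    (γ ε : ℝ)
    (hsharp : ∀ x ∈ X, ‖x - xstar‖ < ε → g xstar + γ * ‖x - xstar‖ ≤ g x)
    (hdiff : DifferentiableAt ℝ g xstar)
    (x : EuclideanSpace ℝ (Fin d)) (hx : x ∈ X) (hxε : ‖x - xstar‖ < ε) :
    γ * ‖x - xstar‖ ≤ ⟪gradient g xstar, x - xstar⟫ := by
  set v := x - xstar with hv
  have hgrad := hdiff.hasGradientAt
  have hline : HasDerivAt (fun t : ℝ => xstar + t • v) v 0 := by
    have : HasDerivAt (fun t : ℝ => t • v) ((1 : ℝ) • v) 0 := (hasDerivAt_id 0).smul_const v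
    simpa using this.const_add xstar
  have hcomp : HasDerivAt (fun t : ℝ => g (xstar + t • v)) ⟪gradient g xstar, v⟫ 0 := by
    have h1 : HasFDerivAt g (InnerProductSpace.toDual ℝ _ (gradient g xstar)) xstar :=
      hgrad.hasFDerivAt
    have h1' : HasFDerivAt g (InnerProductSpace.toDual ℝ _ (gradient g xstar))
        (xstar + (0 : ℝ) • v) := by simpa using h1
    have := h1'.comp_hasDerivAt 0 hline
    simpa [InnerProductSpace.toDual_apply_apply, Function.comp_def] using this
  set f : ℝ → ℝ := fun t => g (xstar + t • v) with hf
  have htend : Filter.Tendsto (slope f 0) (𝓝[>] (0:ℝ)) (𝓝 ⟪gradient g xstar, v⟫) :=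
    (hasDerivAt_iff_tendsto_slope.mp hcomp).mono_left
      (nhdsWithin_mono 0 (fun t ht => ne_of_gt ht))
  refine ge_of_tendsto htend ?_
  filter_upwards [Ioc_mem_nhdsGT_of_mem (by constructor <;> norm_num : (0:ℝ) ∈ Set.Ico 0 1)]
    with t ht
  obtain ⟨ht0, ht1⟩ := ht
  have hxt : xstar + t • v ∈ X := by
    have := hXconvex hxstar hx (by linarith : (0:ℝ) ≤ 1 - t) (le_of_lt ht0) (by ring)
    convert this using 1
    simp [hv]
    module
  have hnorm : ‖(xstar + t • v) - xstar‖ = t * ‖v‖ := by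
    simp [norm_smul, abs_of_pos ht0]
  have hlt : ‖(xstar + t • v) - xstar‖ < ε := by
    rw [hnorm]
    calc t * ‖v‖ ≤ 1 * ‖v‖ := by
          apply mul_le_mul_of_nonneg_right ht1 (norm_nonneg v)
      _ < ε := by simpa using hxε
  have hs := hsharp _ hxt hlt
  rw [hnorm] at hs
  have hf0 : f 0 = g xstar := by simp [hf]
  have hft : f t = g (xstar + t • v) := rfl
  have hft : g xstar + γ * (t * ‖v‖) ≤ f t := hs
  rw [slope_def_field]
  rw [le_div_iff₀ (by simpa using ht0 : (0:ℝ) < t - 0)]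
  rw [hf0]
  nlinarith [hft]

/-- A `γ`-sharp local minimum `x*` of `g` on a compact convex set `X` is locally
variationally coherent: there exists an open neighborhood `U'` of `x*` such that
`⟪∇g(x), x - x*⟫ > 0` for all `x ∈ U' ∩ X` with `x ≠ x*` (and `= 0` for `x = x*`). -/
theorem sharp_min_locally_variationally_coherent {d : ℕ}
    (X : Set (EuclideanSpace ℝ (Fin d))) (hXcompact : IsCompact X) (hXconvex : Convex ℝ X)
    (g : EuclideanSpace ℝ (Fin d) → ℝ)
    (U : Set (EuclideanSpace ℝ (Fin d))) (hUopen : IsOpen U) (hXU : X ⊆ U)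
    (hgC1 : ContDiffOn ℝ 1 g U)
    (xstar : EuclideanSpace ℝ (Fin d)) (hxstar : xstar ∈ X)
    (γ : ℝ) (hγ : 0 < γ)
    (hsharp : ∃ ε > 0, ∀ x ∈ X, ‖x - xstar‖ < ε → g xstar + γ * ‖x - xstar‖ ≤ g x) :
    ∃ U' : Set (EuclideanSpace ℝ (Fin d)), IsOpen U' ∧ xstar ∈ U' ∧
      (∀ x ∈ U' ∩ X, x ≠ xstar → 0 < ⟪gradient g x, x - xstar⟫) ∧
      ⟪gradient g xstar, xstar - xstar⟫ = 0 := by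
  obtain ⟨ε, hε, hsharp⟩ := hsharp
  have hxU : xstar ∈ U := hXU hxstar
  have hdiffOn : DifferentiableOn ℝ g U := hgC1.differentiableOn one_ne_zero
  have hdiff : DifferentiableAt ℝ g xstar :=
    (hdiffOn.differentiableAt (hUopen.mem_nhds hxU))
  -- continuity of the gradient at xstar
  have hfc : ContinuousOn (fderiv ℝ g) U :=
    hgC1.continuousOn_fderiv_of_isOpen hUopen le_rfl
  have hgc : ContinuousAt (gradient g) xstar := by
    have h1 : ContinuousAt (fderiv ℝ g) xstar :=
      hfc.continuousAt (hUopen.mem_nhds hxU)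
    exact ((InnerProductSpace.toDual ℝ _).symm.continuous.continuousAt).comp h1
  obtain ⟨δ, hδ, hδball⟩ := Metric.continuousAt_iff.mp hgc γ hγ
  refine ⟨Metric.ball xstar (min ε δ), Metric.isOpen_ball,
    Metric.mem_ball_self (lt_min hε hδ), ?_, by simp⟩
  rintro x ⟨hxb, hxX⟩ hxne
  have hxdist : dist x xstar < min ε δ := hxb
  have hxε : ‖x - xstar‖ < ε := by
    rw [← dist_eq_norm]; exact lt_of_lt_of_le hxdist (min_le_left _ _)
  have hdir : γ * ‖x - xstar‖ ≤ ⟪gradient g xstar, x - xstar⟫ :=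
    aux_dir_deriv_sharp X hXconvex g xstar hxstar γ ε hsharp hdiff x hxX hxε
  have hΔ : ‖gradient g x - gradient g xstar‖ < γ := by
    have := hδball (show dist x xstar < δ from lt_of_lt_of_le hxdist (min_le_right _ _))
    rwa [dist_eq_norm] at this
  have hvpos : 0 < ‖x - xstar‖ := by
    rw [norm_pos_iff]; exact sub_ne_zero_of_ne hxne
  have key : ⟪gradient g x, x - xstar⟫
      = ⟪gradient g xstar, x - xstar⟫ + ⟪gradient g x - gradient g xstar, x - xstar⟫ := by
    rw [← inner_add_left]; congr 1; abel
  have hbound : -(‖gradient g x - gradient g xstar‖ * ‖x - xstar‖)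
      ≤ ⟪gradient g x - gradient g xstar, x - xstar⟫ :=
    neg_le_of_neg_le (by
      have := abs_real_inner_le_norm (gradient g x - gradient g xstar) (x - xstar)
      linarith [neg_abs_le ⟪gradient g x - gradient g xstar, x - xstar⟫])
  rw [key]
  nlinarith [mul_lt_mul_of_pos_right hΔ hvpos]
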